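/- Let R be a commutative ring with unity, k ∈ ℕ, and I_0,I_1,…,I_k be mutually co-maximal ideals of R, each of which is contained in only finitely many maximal ideals. Let m^i_j ∈ ℕ for 0 ≤ i,j ≤ k be such that there is a permutation σ of {0,1,…,k} with m^i_{σ(i)} = 1 for each 0 ≤ i ≤ k. Then the row map SL_{k+1}(R) → ∏_{i=0}^{k} PF^{k,(m^i_0,…,m^i_k)}_{I_i} is surjective. In particular, if m^i_j = 1 for all 0 ≤ i,j ≤ k (the case of usual projective spaces), the map is surjective. -/

import Mathlib

/-- A vector `(a_0, …, a_k) ∈ R^{k+1}` is unital if `(a_0) + (a_1) + ⋯ + (a_k) = R`. -/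
def IsUnitalVector {R : Type*} [CommRing R] {n : ℕ} (v : Fin n → R) : Prop :=
  ∑ i, Ideal.span {v i} = ⊤

/-- The relation `∼^{k,(m_0,…,m_k)}_I` on unital vectors:
`(a_i) ∼ (b_i)` iff there is `λ ∈ R`, a unit modulo `I`, with `a_i ≡ λ^{m_i} b_i mod I`
for all `i`.  (When `I = ⊤` this relation is total, matching the convention that the
generalized projective space of the unit ideal is a single point.) -/
def ProjRel (R : Type*) [CommRing R] {n : ℕ} (m : Fin n → ℕ) (I : Ideal R)
    (a b : {v : Fin n → R // IsUnitalVector v}) : Prop :=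
  ∃ lam : R, IsUnit (Ideal.Quotient.mk I lam) ∧ ∀ i, a.1 i - lam ^ m i * b.1 i ∈ I

/-- The generalized projective space `PF^{k,(m_0,…,m_k)}_I`: the quotient of the set of
unital `(k+1)`-vectors by the relation `∼^{k,(m_0,…,m_k)}_I`. -/
def GenProjSpace (R : Type*) [CommRing R] {n : ℕ} (m : Fin n → ℕ) (I : Ideal R) :=
  Quot (ProjRel R m I)

open Matrix

namespace RowMapAux

variable {R : Type*} [CommRing R] {n : ℕ}

lemma ideal_sum_eq_sup {ι : Type*} (s : Finset ι) (p : ι → Ideal R) :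
    ∑ i ∈ s, p i = s.sup p := by
  induction s using Finset.cons_induction with
  | empty => simp
  | cons a s ha ih => rw [Finset.sum_cons, Finset.sup_cons, ih, Submodule.add_eq_sup]

lemma ofFn_prod_eq_single {M : Type*} [Monoid M] : ∀ {n : ℕ} (g : Fin n → M) (i : Fin n),
    (∀ j, j ≠ i → g j = 1) → (List.ofFn g).prod = g i := by
  intro n
  induction n with
  | zero => exact fun g i => i.elim0
  | succ n ih =>
    intro g i hj
    rw [List.ofFn_succ, List.prod_cons]
    rcases Fin.eq_zero_or_eq_succ i with h0 | ⟨i', rfl⟩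
    · subst h0
      have h1 : ∀ x ∈ List.ofFn (fun j : Fin n => g j.succ), x = 1 := by
        intro x hx
        rw [List.mem_ofFn] at hx
        obtain ⟨j, rfl⟩ := hx
        exact hj _ (Fin.succ_ne_zero j)
      rw [List.prod_eq_one h1, mul_one]
    · rw [hj 0 (Fin.succ_ne_zero i').symm, one_mul]
      exact ih (fun j => g j.succ) i' fun j hji =>
        hj j.succ fun h => hji (Fin.succ_injective _ h)

/-- rows of a special linear matrix are unital vectors -/
lemma rows_unital (A : Matrix.SpecialLinearGroup (Fin n) R) (i : Fin n) :
    IsUnitalVector (fun j => A.1 i j) := by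
  rw [IsUnitalVector, Ideal.eq_top_iff_one]
  have h1 : (A.1 * A.1.adjugate) i i = 1 := by
    rw [Matrix.mul_adjugate, A.2]; simp
  rw [Matrix.mul_apply] at h1
  have hsum : ∑ j, A.1 i j * A.1.adjugate j i ∈ ∑ l, Ideal.span {A.1 i l} := by
    refine Submodule.sum_mem _ fun j _ => ?_
    have h2 : Ideal.span {A.1 i j} ≤ ∑ l, Ideal.span {A.1 i l} := by
      rw [ideal_sum_eq_sup]
      exact Finset.le_sup (f := fun l => Ideal.span {A.1 i l}) (Finset.mem_univ j)
    exact h2 (Ideal.mem_span_singleton'.2 ⟨A.1.adjugate j i, mul_comm _ _⟩)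
  simpa only [h1] using hsum

lemma unital_map {S : Type*} [CommRing S] (f : R →+* S) (v : Fin n → R)
    (h : IsUnitalVector v) : IsUnitalVector (fun j => f (v j)) := by
  rw [IsUnitalVector, ideal_sum_eq_sup] at h ⊢
  have hmap : ∀ {ι : Type} (s : Finset ι) (p : ι → Ideal R),
      Ideal.map f (s.sup p) = s.sup fun i => Ideal.map f (p i) := by
    intro ι s p
    induction s using Finset.cons_induction with
    | empty => simp
    | cons a s ha ih => rw [Finset.sup_cons, Finset.sup_cons, Ideal.map_sup, ih]
  have := congrArg (Ideal.map f) h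
  rw [Ideal.map_top, hmap] at this
  rw [← this]
  congr 1
  funext j
  rw [Ideal.map_span, Set.image_singleton]

/-- The subgroup of `SL_n` generated by transvections. -/
def Esub (n : ℕ) (R : Type*) [CommRing R] : Subgroup (Matrix.SpecialLinearGroup (Fin n) R) :=
  Subgroup.closure {A | ∃ p q c, ∃ _ : p ≠ q, A.1 = Matrix.transvection p q c}

/-- a transvection as an element of `SL_n` -/
def tvSL {p q : Fin n} (h : p ≠ q) (c : R) : Matrix.SpecialLinearGroup (Fin n) R :=
  ⟨Matrix.transvection p q c, Matrix.det_transvection_of_ne p q h c⟩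

lemma tvSL_mem {p q : Fin n} (h : p ≠ q) (c : R) : tvSL h c ∈ Esub n R :=
  Subgroup.subset_closure ⟨p, q, c, h, rfl⟩

lemma transvection_map {S : Type*} [CommRing S] (f : R →+* S) (p q : Fin n) (c : R) :
    (Matrix.transvection p q c).map f = Matrix.transvection p q (f c) := by
  ext a b
  simp only [Matrix.map_apply, Matrix.transvection, Matrix.add_apply, Matrix.one_apply,
    Matrix.single, Matrix.of_apply, map_add, apply_ite f, _root_.map_one,
    _root_.map_zero]

/-- matrix adding `c p` times column `p` to column `i`, for all `p` -/
def colAdd (i : Fin n) (c : Fin n → R) : Matrix (Fin n) (Fin n) R :=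
  1 + Matrix.of (fun p q => if q = i then c p else 0)

/-- matrix adding `d q` times (row) entries from position `i` to position `q` -/
def rowAdd (i : Fin n) (d : Fin n → R) : Matrix (Fin n) (Fin n) R :=
  1 + Matrix.of (fun p q => if p = i then d q else 0)

lemma colAdd_zero (i : Fin n) : colAdd i (0 : Fin n → R) = 1 := by
  ext p q; simp [colAdd]

lemma rowAdd_zero (i : Fin n) : rowAdd i (0 : Fin n → R) = 1 := by
  ext p q; simp [rowAdd]

lemma colAdd_mul (i : Fin n) (c c' : Fin n → R) (hc' : c' i = 0) :
    colAdd i c * colAdd i c' = colAdd i (c + c') := by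
  have hCC : (Matrix.of (fun p q => if q = i then c p else 0) *
      Matrix.of (fun p q => if q = i then c' p else 0) : Matrix (Fin n) (Fin n) R) = 0 := by
    ext p r
    rw [Matrix.mul_apply, Matrix.zero_apply]
    rw [Finset.sum_eq_single i (fun q _ hq => by simp [hq]) (by simp)]
    simp [hc']
  simp only [colAdd, add_mul, mul_add, one_mul, mul_one, hCC, add_zero]
  ext p q
  simp only [Matrix.add_apply, Matrix.of_apply, Pi.add_apply]
  split_ifs <;> ring

lemma rowAdd_mul (i : Fin n) (d d' : Fin n → R) (hd : d i = 0) :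
    rowAdd i d * rowAdd i d' = rowAdd i (d + d') := by
  have hCC : (Matrix.of (fun p q => if p = i then d q else 0) *
      Matrix.of (fun p q => if p = i then d' q else 0) : Matrix (Fin n) (Fin n) R) = 0 := by
    ext p r
    rw [Matrix.mul_apply, Matrix.zero_apply]
    rw [Finset.sum_eq_single i (fun q _ hq => by simp [hq]) (by simp)]
    simp [hd]
  simp only [rowAdd, add_mul, mul_add, one_mul, mul_one, hCC, add_zero]
  ext p q
  simp only [Matrix.add_apply, Matrix.of_apply, Pi.add_apply]
  split_ifs <;> ring

lemma colAdd_single {i j : Fin n} (hj : j ≠ i) (t : R) :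
    colAdd i (Pi.single j t) = Matrix.transvection j i t := by
  ext p q
  simp only [colAdd, Matrix.transvection, Matrix.single_eq_of_single_single,
    Matrix.add_apply, Matrix.of_apply, Pi.single_apply, ite_apply, Pi.zero_apply]
  congr 1
  split_ifs <;> rfl

lemma rowAdd_single {i j : Fin n} (hj : j ≠ i) (t : R) :
    rowAdd i (Pi.single j t) = Matrix.transvection i j t := by
  ext p q
  simp only [rowAdd, Matrix.transvection, Matrix.single_eq_of_single_single,
    Matrix.add_apply, Matrix.of_apply, Pi.single_apply, ite_apply, Pi.zero_apply]

lemma colAdd_mem (i : Fin n) (c : Fin n → R) (hci : c i = 0) :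
    ∃ B : Matrix.SpecialLinearGroup (Fin n) R, B ∈ Esub n R ∧ B.1 = colAdd i c := by
  classical
  suffices H : ∀ s : Finset (Fin n), ∀ c : Fin n → R, c i = 0 → (∀ j ∉ s, c j = 0) →
      ∃ B : Matrix.SpecialLinearGroup (Fin n) R, B ∈ Esub n R ∧ B.1 = colAdd i c from
    H Finset.univ c hci fun j hj => absurd (Finset.mem_univ j) hj
  intro s
  induction s using Finset.induction with
  | empty =>
    intro c hci h0
    have hc : c = 0 := funext fun j => h0 j (Finset.notMem_empty j)
    exact ⟨1, one_mem _, by rw [hc, colAdd_zero]; rfl⟩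
  | @insert a s hnot ih =>
    intro c hci h0
    by_cases ha : a = i
    · refine ih c hci fun j hj => ?_
      by_cases hja : j = a
      · rw [hja, ha]; exact hci
      · exact h0 j (by simp [hja, hj])
    · set c' := Function.update c a 0 with hc'def
      have hc'i : c' i = 0 := by
        rw [hc'def, Function.update_apply]
        split_ifs with h
        · rfl
        · exact hci
      obtain ⟨B', hB', hB'eq⟩ := ih c' hc'i (fun j hj => by
        rw [hc'def, Function.update_apply]
        split_ifs with h
        · rfl
        · exact h0 j (by simp [h, hj]))
      refine ⟨tvSL (show a ≠ i from ha) (c a) * B', mul_mem (tvSL_mem _ _) hB', ?_⟩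
      rw [Matrix.SpecialLinearGroup.coe_mul, hB'eq]
      show Matrix.transvection a i (c a) * colAdd i c' = colAdd i c
      rw [← colAdd_single (show a ≠ i from ha), colAdd_mul i _ _ hc'i]
      have hcc : Pi.single a (c a) + c' = c := by
        funext j
        rw [Pi.add_apply, hc'def, Function.update_apply, Pi.single_apply]
        by_cases hja : j = a <;> simp [hja]
      rw [hcc]
  
lemma rowAdd_mem (i : Fin n) (d : Fin n → R) (hdi : d i = 0) :
    ∃ B : Matrix.SpecialLinearGroup (Fin n) R, B ∈ Esub n R ∧ B.1 = rowAdd i d := by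
  classical
  suffices H : ∀ s : Finset (Fin n), ∀ d : Fin n → R, d i = 0 → (∀ j ∉ s, d j = 0) →
      ∃ B : Matrix.SpecialLinearGroup (Fin n) R, B ∈ Esub n R ∧ B.1 = rowAdd i d from
    H Finset.univ d hdi fun j hj => absurd (Finset.mem_univ j) hj
  intro s
  induction s using Finset.induction with
  | empty =>
    intro d hdi h0
    have hd : d = 0 := funext fun j => h0 j (Finset.notMem_empty j)
    exact ⟨1, one_mem _, by rw [hd, rowAdd_zero]; rfl⟩
  | @insert a s hnot ih =>
    intro d hdi h0
    by_cases ha : a = i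
    · refine ih d hdi fun j hj => ?_
      by_cases hja : j = a
      · rw [hja, ha]; exact hdi
      · exact h0 j (by simp [hja, hj])
    · set d' := Function.update d a 0 with hd'def
      have hd'i : d' i = 0 := by
        rw [hd'def, Function.update_apply]
        split_ifs with h
        · rfl
        · exact hdi
      obtain ⟨B', hB', hB'eq⟩ := ih d' hd'i (fun j hj => by
        rw [hd'def, Function.update_apply]
        split_ifs with h
        · rfl
        · exact h0 j (by simp [h, hj]))
      refine ⟨tvSL (show i ≠ a from fun h => ha h.symm) (d a) * B', mul_mem (tvSL_mem _ _) hB', ?_⟩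
      rw [Matrix.SpecialLinearGroup.coe_mul, hB'eq]
      show Matrix.transvection i a (d a) * rowAdd i d' = rowAdd i d
      rw [← rowAdd_single (show a ≠ i from ha),
        rowAdd_mul i _ _ (by rw [Pi.single_apply]; exact if_neg (Ne.symm ha))]
      have hdd : Pi.single a (d a) + d' = d := by
        funext j
        rw [Pi.add_apply, hd'def, Function.update_apply, Pi.single_apply]
        by_cases hja : j = a <;> simp [hja]
      rw [hdd]

lemma vecMul_colAdd (v : Fin n → R) (i : Fin n) (c : Fin n → R) (q : Fin n) :
    (v ᵥ* colAdd i c) q = v q + if q = i then ∑ p, v p * c p else 0 := by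
  rw [colAdd, Matrix.vecMul_add, Matrix.vecMul_one, Pi.add_apply]
  congr 1
  by_cases h : q = i <;> simp [Matrix.vecMul, dotProduct, h]

lemma vecMul_rowAdd (v : Fin n → R) (i : Fin n) (d : Fin n → R) (q : Fin n) :
    (v ᵥ* rowAdd i d) q = v q + v i * d q := by
  rw [rowAdd, Matrix.vecMul_add, Matrix.vecMul_one, Pi.add_apply]
  congr 1
  simp [Matrix.vecMul, dotProduct, mul_ite, Finset.sum_ite_eq']

lemma exists_unit_comb {S : Type*} [CommRing S] (hfm : {M : Ideal S | M.IsMaximal}.Finite)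
    (v : Fin n → S) (hv : IsUnitalVector v) (i : Fin n) :
    ∃ c : Fin n → S, c i = 0 ∧ IsUnit (v i + ∑ p, v p * c p) := by
  classical
  haveI : Finite {M : Ideal S | M.IsMaximal} := hfm.to_subtype
  have hex : ∀ M : {M : Ideal S | M.IsMaximal}, ∃ j, v j ∉ (M : Ideal S) := by
    intro M
    by_contra hcon
    push_neg at hcon
    have hle : (⊤ : Ideal S) ≤ (M : Ideal S) := by
      have hv' : ∑ j, Ideal.span {v j} = ⊤ := hv
      rw [← hv', ideal_sum_eq_sup]
      refine Finset.sup_le fun j _ => ?_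
      rw [Ideal.span_le, Set.singleton_subset_iff]
      exact hcon j
    exact M.2.ne_top (top_le_iff.mp hle)
  choose jM hjM using hex
  have hcop : Pairwise (Function.onFun IsCoprime fun M : {M : Ideal S | M.IsMaximal} => (M : Ideal S)) := by
    intro M M' hne
    exact Ideal.isCoprime_iff_sup_eq.mpr
      (Ideal.IsMaximal.coprime_of_ne M.2 M'.2 fun h => hne (Subtype.ext h))
  have hCRT : ∀ g : (M : {M : Ideal S | M.IsMaximal}) → S ⧸ (M : Ideal S),
      ∃ x : S, ∀ M : {M : Ideal S | M.IsMaximal}, Ideal.Quotient.mk (M : Ideal S) x = g M := by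
    intro g
    obtain ⟨y, hy⟩ := Ideal.quotientInfToPiQuotient_surj hcop g
    obtain ⟨x, rfl⟩ := Ideal.Quotient.mk_surjective y
    exact ⟨x, fun M => by rw [← congrFun hy M, Ideal.quotientInfToPiQuotient_mk']⟩
  have hc : ∀ j : Fin n, ∃ x : S, ∀ M : {M : Ideal S | M.IsMaximal},
      Ideal.Quotient.mk (M : Ideal S) x
        = if v i ∈ (M : Ideal S) ∧ jM M = j then 1 else 0 :=
    fun j => hCRT _
  choose c0 hc0 using hc
  refine ⟨Function.update c0 i 0, Function.update_self _ _ _, ?_⟩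
  by_contra hs
  set s := v i + ∑ p, v p * Function.update c0 i 0 p with hsdef
  have hnet : Ideal.span {s} ≠ ⊤ := fun h => hs (Ideal.span_singleton_eq_top.mp h)
  obtain ⟨M, hM, hle⟩ := Ideal.exists_le_maximal _ hnet
  have hsM : s ∈ M := hle (Ideal.subset_span rfl)
  have hc0M : ∀ p, Ideal.Quotient.mk M (c0 p)
      = if v i ∈ M ∧ jM ⟨M, hM⟩ = p then 1 else 0 := fun p => hc0 p ⟨M, hM⟩
  have hjM' : v (jM ⟨M, hM⟩) ∉ M := hjM ⟨M, hM⟩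
  have hmk : (0 : S ⧸ M) = Ideal.Quotient.mk M (v i)
      + ∑ p, Ideal.Quotient.mk M (v p) * Ideal.Quotient.mk M (Function.update c0 i 0 p) := by
    rw [← (Ideal.Quotient.eq_zero_iff_mem (I := M)).mpr hsM, hsdef]
    simp [_root_.map_add, map_sum, _root_.map_mul]
  by_cases hvi : v i ∈ M
  · have hji : jM ⟨M, hM⟩ ≠ i := fun h => hjM' (by rw [h]; exact hvi)
    have hterm : ∀ p : Fin n, Ideal.Quotient.mk M (Function.update c0 i 0 p)
        = if jM ⟨M, hM⟩ = p then 1 else 0 := by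
      intro p
      by_cases h1 : p = i
      · subst h1
        simp only [Function.update_self, map_zero]
        exact (if_neg hji).symm
      · rw [Function.update_of_ne h1, hc0M p]
        by_cases h2 : jM ⟨M, hM⟩ = p
        · rw [if_pos ⟨hvi, h2⟩, if_pos h2]
        · rw [if_neg fun hcon => h2 hcon.2, if_neg h2]
    have hsum : ∑ p, Ideal.Quotient.mk M (v p) * Ideal.Quotient.mk M (Function.update c0 i 0 p)
        = Ideal.Quotient.mk M (v (jM ⟨M, hM⟩)) := by
      rw [Finset.sum_eq_single (jM ⟨M, hM⟩)
        (fun p _ hp => by rw [hterm p, if_neg fun h => hp h.symm, mul_zero])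
        (fun h => absurd (Finset.mem_univ _) h)]
      rw [hterm _, if_pos rfl, mul_one]
    rw [hsum, Ideal.Quotient.eq_zero_iff_mem.mpr hvi, zero_add] at hmk
    exact hjM' (Ideal.Quotient.eq_zero_iff_mem.mp hmk.symm)
  · have hzero : ∀ p, Ideal.Quotient.mk M (Function.update c0 i 0 p) = 0 := by
      intro p
      by_cases h1 : p = i
      · subst h1; simp
      · rw [Function.update_of_ne h1, hc0M p, if_neg fun hcon => hvi hcon.1]
    simp only [hzero, mul_zero, Finset.sum_const_zero, add_zero] at hmk
    exact hvi (Ideal.Quotient.eq_zero_iff_mem.mp hmk.symm)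

lemma exists_E {S : Type*} [CommRing S] (hfm : {M : Ideal S | M.IsMaximal}.Finite)
    (v : Fin n → S) (hv : IsUnitalVector v) (i : Fin n) (hn : 1 < n) :
    ∃ E : Matrix.SpecialLinearGroup (Fin n) S, E ∈ Esub n S ∧ v ᵥ* E.1 = Pi.single i 1 := by
  classical
  obtain ⟨c, hci, hu⟩ := exists_unit_comb hfm v hv i
  obtain ⟨B₁, hB₁, hB₁eq⟩ := colAdd_mem i c hci
  set w := v ᵥ* B₁.1 with hw
  obtain ⟨U, hU⟩ := hu
  have hwi : w i = (U : S) := by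
    rw [hw, hB₁eq, vecMul_colAdd, if_pos rfl]
    exact hU.symm
  haveI : Nontrivial (Fin n) := Fin.nontrivial_iff_two_le.mpr hn
  obtain ⟨p₀, hp₀⟩ := exists_ne i
  have hd₂i : (Pi.single p₀ ((↑U⁻¹ : S) * (1 - w p₀)) : Fin n → S) i = 0 := by
    rw [Pi.single_apply]
    exact if_neg (Ne.symm hp₀)
  obtain ⟨B₂, hB₂, hB₂eq⟩ := rowAdd_mem i _ hd₂i
  set w2 := w ᵥ* B₂.1 with hw2
  have hw2p₀ : w2 p₀ = 1 := by
    rw [hw2, hB₂eq, vecMul_rowAdd, hwi, Pi.single_eq_same, ← mul_assoc,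
      Units.mul_inv, one_mul]
    ring
  have hw2i : w2 i = w i := by
    rw [hw2, hB₂eq, vecMul_rowAdd, hd₂i, mul_zero, add_zero]
  have hw2q : ∀ q, q ≠ p₀ → w2 q = w q := fun q hq => by
    rw [hw2, hB₂eq, vecMul_rowAdd, Pi.single_apply, if_neg hq, mul_zero, add_zero]
  have hc₃i : (Pi.single p₀ (1 - w2 i) : Fin n → S) i = 0 := by
    rw [Pi.single_apply]
    exact if_neg (Ne.symm hp₀)
  obtain ⟨B₃, hB₃, hB₃eq⟩ := colAdd_mem i _ hc₃i
  set w3 := w2 ᵥ* B₃.1 with hw3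
  have hw3i : w3 i = 1 := by
    rw [hw3, hB₃eq, vecMul_colAdd, if_pos rfl]
    rw [Finset.sum_eq_single p₀
      (fun p _ hp => by rw [Pi.single_apply, if_neg hp, mul_zero])
      (fun h => absurd (Finset.mem_univ _) h)]
    rw [Pi.single_eq_same, hw2p₀, one_mul]
    ring
  have hw3q : ∀ q, q ≠ i → w3 q = w2 q := fun q hq => by
    rw [hw3, hB₃eq, vecMul_colAdd, if_neg hq, add_zero]
  have hd₄i : (fun q => if q = i then 0 else -(w3 q)) i = (0 : S) := by simp
  obtain ⟨B₄, hB₄, hB₄eq⟩ := rowAdd_mem i (fun q => if q = i then 0 else -(w3 q)) hd₄i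
  refine ⟨B₁ * B₂ * B₃ * B₄, mul_mem (mul_mem (mul_mem hB₁ hB₂) hB₃) hB₄, ?_⟩
  have hcoe : (B₁ * B₂ * B₃ * B₄).1 = B₁.1 * B₂.1 * B₃.1 * B₄.1 := rfl
  rw [hcoe, ← Matrix.vecMul_vecMul, ← Matrix.vecMul_vecMul, ← Matrix.vecMul_vecMul,
    ← hw, ← hw2, ← hw3]
  funext q
  rw [hB₄eq, vecMul_rowAdd, hw3i, one_mul]
  by_cases hq : q = i
  · subst hq
    simp [hw3i]
  · rw [if_neg hq, add_neg_cancel]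
    exact (Pi.single_eq_of_ne (M := fun _ => S) hq 1).symm

lemma row_of_inv {S : Type*} [CommRing S] (E : Matrix.SpecialLinearGroup (Fin n) S)
    (v : Fin n → S) (i : Fin n) (h : v ᵥ* E.1 = Pi.single i 1) :
    ∀ j, (E⁻¹).1 i j = v j := by
  intro j
  have h1 : E.1 * (E⁻¹).1 = 1 := by
    have h2 := congrArg Subtype.val (mul_inv_cancel E)
    exact h2
  have h2 : v = Pi.single i 1 ᵥ* (E⁻¹).1 := by
    rw [← h, Matrix.vecMul_vecMul, h1, Matrix.vecMul_one]
  rw [h2]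
  simp [Matrix.vecMul, dotProduct, Pi.single_apply, ite_mul, Finset.sum_ite_eq]

lemma exists_lift (I K : Ideal R) (hIK : I + K = ⊤)
    (E : Matrix.SpecialLinearGroup (Fin n) (R ⧸ I)) (hE : E ∈ Esub n (R ⧸ I)) :
    ∃ B : Matrix.SpecialLinearGroup (Fin n) R,
      B.1.map (Ideal.Quotient.mk I) = E.1 ∧ B.1.map (Ideal.Quotient.mk K) = 1 := by
  obtain ⟨y, hyK, hy1⟩ : ∃ y ∈ K, Ideal.Quotient.mk I y = 1 := by
    have h1 : (1 : R) ∈ I ⊔ K := by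
      rw [← Submodule.add_eq_sup, hIK]
      trivial
    obtain ⟨a, ha, b, hb, hab⟩ := Submodule.mem_sup.mp h1
    refine ⟨b, hb, ?_⟩
    have h0 : Ideal.Quotient.mk I a = 0 := Ideal.Quotient.eq_zero_iff_mem.mpr ha
    calc Ideal.Quotient.mk I b
        = Ideal.Quotient.mk I (a + b) - Ideal.Quotient.mk I a := by rw [map_add]; ring
      _ = 1 := by rw [hab, h0, _root_.map_one, sub_zero]
  induction hE using Subgroup.closure_induction with
  | mem A hA =>
    obtain ⟨p, q, cb, hpq, hAeq⟩ := hA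
    obtain ⟨c0, hc0⟩ := Ideal.Quotient.mk_surjective cb
    refine ⟨tvSL hpq (c0 * y), ?_, ?_⟩
    · rw [show (tvSL hpq (c0 * y)).1 = Matrix.transvection p q (c0 * y) from rfl,
        transvection_map, hAeq]
      congr 1
      rw [_root_.map_mul, hc0, hy1, mul_one]
    · rw [show (tvSL hpq (c0 * y)).1 = Matrix.transvection p q (c0 * y) from rfl,
        transvection_map,
        Ideal.Quotient.eq_zero_iff_mem.mpr (Ideal.mul_mem_left K c0 hyK)]
      exact Matrix.transvection_zero p q
  | one =>
    exact ⟨1, Matrix.map_one _ (_root_.map_zero _) (_root_.map_one _),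
      Matrix.map_one _ (_root_.map_zero _) (_root_.map_one _)⟩
  | mul x x' hx hx' ihx ihx' =>
    obtain ⟨B1, h1I, h1K⟩ := ihx
    obtain ⟨B2, h2I, h2K⟩ := ihx'
    refine ⟨B1 * B2, ?_, ?_⟩
    · show (B1.1 * B2.1).map _ = x.1 * x'.1
      rw [Matrix.map_mul, h1I, h2I]
    · show (B1.1 * B2.1).map _ = 1
      rw [Matrix.map_mul, h1K, h2K, mul_one]
  | inv x hx ihx =>
    obtain ⟨B, hI, hK⟩ := ihx
    have hBB : B.1 * (B⁻¹).1 = 1 := congrArg Subtype.val (mul_inv_cancel B)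
    refine ⟨B⁻¹, ?_, ?_⟩
    · have hxx : (x⁻¹).1 * x.1 = 1 := congrArg Subtype.val (inv_mul_cancel x)
      have h2 : x.1 * ((B⁻¹).1.map (Ideal.Quotient.mk I)) = 1 := by
        rw [← hI, ← Matrix.map_mul, hBB]
        exact Matrix.map_one _ (_root_.map_zero _) (_root_.map_one _)
      calc (B⁻¹).1.map (Ideal.Quotient.mk I)
          = ((x⁻¹).1 * x.1) * ((B⁻¹).1.map (Ideal.Quotient.mk I)) := by rw [hxx, one_mul]
        _ = (x⁻¹).1 * (x.1 * ((B⁻¹).1.map (Ideal.Quotient.mk I))) := by rw [mul_assoc]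
        _ = (x⁻¹).1 := by rw [h2, mul_one]
    · calc (B⁻¹).1.map (Ideal.Quotient.mk K)
          = (B.1.map (Ideal.Quotient.mk K)) * ((B⁻¹).1.map (Ideal.Quotient.mk K)) := by
            rw [hK, one_mul]
        _ = (B.1 * (B⁻¹).1).map (Ideal.Quotient.mk K) := Matrix.map_mul.symm
        _ = 1 := by
            rw [hBB]
            exact Matrix.map_one _ (_root_.map_zero _) (_root_.map_one _)

lemma entry_cong {J : Ideal R} (B : Matrix (Fin n) (Fin n) R)
    (h : B.map (Ideal.Quotient.mk J) = 1) (p q : Fin n) :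
    B p q - (1 : Matrix (Fin n) (Fin n) R) p q ∈ J := by
  have h2 := congrFun (congrFun h p) q
  have h3 : (1 : Matrix (Fin n) (Fin n) (R ⧸ J)) p q
      = Ideal.Quotient.mk J ((1 : Matrix (Fin n) (Fin n) R) p q) := by
    by_cases hpq : p = q <;> simp [Matrix.one_apply, hpq]
  rw [h3] at h2
  exact Ideal.Quotient.eq.mp h2

lemma one_of_entry {J : Ideal R} (B : Matrix (Fin n) (Fin n) R)
    (h : ∀ p q, B p q - (1 : Matrix (Fin n) (Fin n) R) p q ∈ J) :
    B.map (Ideal.Quotient.mk J) = 1 := by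
  ext p q
  have h1 : Ideal.Quotient.mk J (B p q)
      = Ideal.Quotient.mk J ((1 : Matrix (Fin n) (Fin n) R) p q) :=
    Ideal.Quotient.eq.mpr (h p q)
  rw [Matrix.map_apply, h1]
  by_cases hpq : p = q <;> simp [Matrix.one_apply, hpq]

lemma quot_max_finite (I : Ideal R) (hfin : {M : Ideal R | M.IsMaximal ∧ I ≤ M}.Finite) :
    {M : Ideal (R ⧸ I) | M.IsMaximal}.Finite := by
  have hsur : Function.Surjective (Ideal.Quotient.mk I) := Ideal.Quotient.mk_surjective
  have hinj : Set.InjOn (fun M : Ideal (R ⧸ I) => Ideal.comap (Ideal.Quotient.mk I) M)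
      {M : Ideal (R ⧸ I) | M.IsMaximal} := by
    intro M hM M' hM' h
    have h2 := congrArg (Ideal.map (Ideal.Quotient.mk I)) h
    simpa [Ideal.map_comap_of_surjective _ hsur] using h2
  refine Set.Finite.of_finite_image (hfin.subset ?_) hinj
  rintro _ ⟨M, hM, rfl⟩
  refine ⟨Ideal.comap_isMaximal_of_surjective _ hsur (H := hM), fun x hx => ?_⟩
  simp [Ideal.mem_comap, Ideal.Quotient.eq_zero_iff_mem.mpr hx]

/-- entrywise quotient map on `SL_n` as a monoid hom to matrices -/
def slmHom {S : Type*} [CommRing S] (f : R →+* S) :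
    Matrix.SpecialLinearGroup (Fin n) R →* Matrix (Fin n) (Fin n) S where
  toFun A := A.1.map f
  map_one' := Matrix.map_one _ (_root_.map_zero _) (_root_.map_one _)
  map_mul' A B := by
    show (A.1 * B.1).map f = A.1.map f * B.1.map f
    rw [Matrix.map_mul]


end RowMapAux

/-- Let `R` be a commutative ring with unity and `I_0, …, I_k` mutually
co-maximal ideals of `R`, each contained in only finitely many maximal ideals. Let
`m^i_j ∈ ℕ` be such that for some permutation `σ` of `{0, …, k}` we have `m^i_{σ(i)} = 1`
for each `i`. Then the row map `SL_{k+1}(R) → ∏_{i=0}^{k} PF^{k,(m^i_0,…,m^i_k)}_{I_i}` is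
surjective.  (In particular this covers the case `m^i_j = 1` for all `i, j`, i.e. usual
projective spaces, via `σ = id`.) -/
theorem rowMap_surjective_of_perm {R : Type*} [CommRing R]
    (k : ℕ) (I : Fin (k + 1) → Ideal R)
    (hcomax : ∀ i j, i ≠ j → I i + I j = ⊤)
    (hfin : ∀ i, {M : Ideal R | M.IsMaximal ∧ I i ≤ M}.Finite)
    (m : Fin (k + 1) → Fin (k + 1) → ℕ)
    (σ : Equiv.Perm (Fin (k + 1))) (hσ : ∀ i, m i (σ i) = 1) :
    ∀ x : (i : Fin (k + 1)) → GenProjSpace R (m i) (I i),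
      ∃ A : Matrix.SpecialLinearGroup (Fin (k + 1)) R,
        ∃ h : ∀ i, IsUnitalVector (fun j => A.1 i j),
          ∀ i, Quot.mk (ProjRel R (m i) (I i)) ⟨fun j => A.1 i j, h i⟩ = x i := by
  classical
  intro x
  have hrep := fun i => Quot.exists_rep (x i)
  choose a ha using hrep
  by_cases hk : k = 0
  · subst hk
    refine ⟨1, fun i => RowMapAux.rows_unital 1 i, fun i => ?_⟩
    rw [← ha i]
    apply Quot.sound
    have hunit : IsUnit ((a i).1 0) := by
      have h2 : ∑ j, Ideal.span {(a i).1 j} = ⊤ := (a i).2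
      rw [← Ideal.span_singleton_eq_top]
      simpa [Fin.sum_univ_one] using h2
    obtain ⟨u, hu⟩ := hunit
    refine ⟨(↑u⁻¹ : R), (Ideal.Quotient.mk (I i)).isUnit_map u⁻¹.isUnit, fun j => ?_⟩
    have hsub : ∀ p q : Fin (0 + 1), p = q := fun p q =>
      Fin.ext (by have h1 := p.2; have h2 := q.2; omega)
    have hm : m i j = 1 := by
      have h := hσ i
      rwa [hsub (σ i) j] at h
    have hz : (1 : Matrix.SpecialLinearGroup (Fin (0 + 1)) R).1 i j
        - (↑u⁻¹ : R) ^ m i j * (a i).1 j = 0 := by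
      have h1 : (1 : Matrix.SpecialLinearGroup (Fin (0 + 1)) R).1 i j = 1 := by
        rw [hsub i j]
        exact Matrix.one_apply_eq _
      have h2 : (a i).1 j = (u : R) := by
        rw [hsub j 0, ← hu]
      rw [hm, pow_one, h1, h2, Units.inv_mul, sub_self]
    have hmem := zero_mem (I i)
    rwa [← hz] at hmem
  · have hn : 1 < k + 1 := by omega
    have main : ∀ i, ∃ B : Matrix.SpecialLinearGroup (Fin (k + 1)) R,
        (∀ j, B.1 i j - (a i).1 j ∈ I i) ∧
        (∀ l, l ≠ i → B.1.map (Ideal.Quotient.mk (I l)) = 1) := by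
      intro i
      have hfm := RowMapAux.quot_max_finite (I i) (hfin i)
      have hvu : IsUnitalVector (fun j => Ideal.Quotient.mk (I i) ((a i).1 j)) :=
        RowMapAux.unital_map _ _ (a i).2
      obtain ⟨E, hEmem, hEeq⟩ := RowMapAux.exists_E hfm _ hvu i hn
      have hcop : IsCoprime (I i) (∏ l ∈ Finset.univ.erase i, I l) :=
        IsCoprime.prod_right fun l hl => Ideal.isCoprime_iff_add.mpr
          (by rw [Ideal.one_eq_top]; exact hcomax i l (Ne.symm (Finset.mem_erase.mp hl).1))
      have hIK : I i + (∏ l ∈ Finset.univ.erase i, I l) = ⊤ :=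
        (Ideal.isCoprime_iff_add.mp hcop).trans Ideal.one_eq_top
      obtain ⟨B, hBI, hBK⟩ := RowMapAux.exists_lift (I i) _ hIK E⁻¹ (inv_mem hEmem)
      have hrow := RowMapAux.row_of_inv E _ i hEeq
      refine ⟨B, fun j => ?_, fun l hl => ?_⟩
      · have h1 : Ideal.Quotient.mk (I i) (B.1 i j)
            = Ideal.Quotient.mk (I i) ((a i).1 j) :=
          (congrFun (congrFun hBI i) j).trans (hrow j)
        exact Ideal.Quotient.eq.mp h1
      · have hKle : (∏ l ∈ Finset.univ.erase i, I l) ≤ I l :=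
          le_trans Ideal.prod_le_inf
            (Finset.inf_le (Finset.mem_erase.mpr ⟨hl, Finset.mem_univ l⟩))
        exact RowMapAux.one_of_entry _ fun p q => hKle (RowMapAux.entry_cong _ hBK p q)
    choose B hB1 hB2 using main
    set A : Matrix.SpecialLinearGroup (Fin (k + 1)) R := (List.ofFn B).prod with hA
    refine ⟨A, fun i => RowMapAux.rows_unital A i, fun i => ?_⟩
    rw [← ha i]
    apply Quot.sound
    have hmap : A.1.map (Ideal.Quotient.mk (I i))
        = (B i).1.map (Ideal.Quotient.mk (I i)) := by
      have h1 : RowMapAux.slmHom (Ideal.Quotient.mk (I i)) A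
          = ((List.ofFn B).map (RowMapAux.slmHom (Ideal.Quotient.mk (I i)))).prod := by
        rw [hA]
        exact map_list_prod _ _
      rw [List.map_ofFn] at h1
      rw [RowMapAux.ofFn_prod_eq_single
        (⇑(RowMapAux.slmHom (Ideal.Quotient.mk (I i))) ∘ B) i
        (fun j hj => hB2 j i (Ne.symm hj))] at h1
      exact h1
    refine ⟨1, by simp, fun j => ?_⟩
    rw [one_pow, one_mul]
    have h1 : Ideal.Quotient.mk (I i) (A.1 i j)
        = Ideal.Quotient.mk (I i) ((B i).1 i j) := congrFun (congrFun hmap i) j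
    have h2 : A.1 i j - (B i).1 i j ∈ I i := Ideal.Quotient.eq.mp h1
    have h3 := hB1 i j
    have h4 := Ideal.add_mem _ h2 h3
    rwa [sub_add_sub_cancel] at h4
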